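/- Let 𝒢 be the group with generators yi (i ≥ 1) subject to yi² = 1 and ((yi,yj),yk) = 1. Every element a ∈ 𝒢 can be written uniquely as a = y_{i1}···y_{iq} (y_{j1},y_{j2})···(y_{j_{2q'-1}},y_{j_{2q'}}) with q, q' ≥ 0, i1 < ··· < iq, j_{2s-1} < j_{2s} for each s, and the pairs (j_{2s-1},j_{2s}) strictly increasing in a fixed linear order. -/

import Mathlib

/-- The group commutator `(a,b) = a⁻¹ b⁻¹ a b`. -/
def gc {G : Type*} [Group G] (a b : G) : G := a⁻¹ * b⁻¹ * a * b

/-- The relations `yᵢ² = 1` and `((yᵢ,yⱼ),yₖ) = 1`. -/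
def grpRels : Set (FreeGroup ℕ) :=
  (Set.range fun i => FreeGroup.of i ^ 2) ∪
    {x | ∃ i j k, x = gc (gc (FreeGroup.of i) (FreeGroup.of j)) (FreeGroup.of k)}

/-- The group `𝒢` presented by generators `y₁, y₂, …` with relations `yᵢ² = 1`,
`((yᵢ,yⱼ),yₖ) = 1`. -/
def GrpG : Type := PresentedGroup grpRels

instance : Group GrpG := by unfold GrpG; infer_instance

/-- The generator `yᵢ` of `𝒢`. -/
def yy (i : ℕ) : GrpG := PresentedGroup.of i

namespace NFaux

lemma map_gc {G G' : Type*} [Group G] [Group G'] (f : G →* G') (a b : G) :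
    f (gc a b) = gc (f a) (f b) := by
  simp [gc, map_mul, map_inv]

abbrev V := ℕ → ZMod 2
abbrev C := ℕ × ℕ → ZMod 2

def bil (u v : V) : C := fun p => if p.1 < p.2 then u p.2 * v p.1 else 0

lemma bil_add_left (u u' v : V) : bil (u + u') v = bil u v + bil u' v := by
  funext p; simp only [bil, Pi.add_apply]; split <;> ring

lemma bil_add_right (u v v' : V) : bil u (v + v') = bil u v + bil u v' := by
  funext p; simp only [bil, Pi.add_apply]; split <;> ring

lemma bil_zero_left (v : V) : bil 0 v = 0 := by
  funext p; simp only [bil, Pi.zero_apply]; split <;> ring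

lemma bil_zero_right (u : V) : bil u 0 = 0 := by
  funext p; simp only [bil, Pi.zero_apply]; split <;> ring

lemma addV_self (u : V) : u + u = 0 := by
  funext n; exact CharTwo.add_self_eq_zero _

lemma addC_self (x : C) : x + x = 0 := by
  funext n; exact CharTwo.add_self_eq_zero _

structure H where
  u : V
  x : C

instance : Mul H := ⟨fun a b => ⟨a.u + b.u, a.x + b.x + bil a.u b.u⟩⟩
instance : One H := ⟨⟨0, 0⟩⟩
instance : Inv H := ⟨fun a => ⟨a.u, a.x + bil a.u a.u⟩⟩

@[simp] lemma mul_u (a b : H) : (a * b).u = a.u + b.u := rfl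
@[simp] lemma mul_x (a b : H) : (a * b).x = a.x + b.x + bil a.u b.u := rfl
@[simp] lemma one_u : (1 : H).u = 0 := rfl
@[simp] lemma one_x : (1 : H).x = 0 := rfl
@[simp] lemma inv_u (a : H) : (a⁻¹).u = a.u := rfl
@[simp] lemma inv_x (a : H) : (a⁻¹).x = a.x + bil a.u a.u := rfl

@[ext] lemma H.ext' {a b : H} (h1 : a.u = b.u) (h2 : a.x = b.x) : a = b := by
  cases a; cases b; simp_all

instance : Group H where
  mul_assoc a b c := by
    ext : 1
    · simp [add_assoc]
    · simp only [mul_u, mul_x, bil_add_left, bil_add_right]; abel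
  one_mul a := by ext : 1 <;> simp [bil_zero_left]
  mul_one a := by ext : 1 <;> simp [bil_zero_right]
  inv_mul_cancel a := by
    ext : 1
    · simp [addV_self]
    · simp only [mul_u, mul_x, inv_u, inv_x, one_x]
      rw [add_assoc, add_add_add_comm, addC_self, addC_self, add_zero]

/-- helper for char-2 additive computations in `C`. -/
lemma c2 (x y : C) : x + (x + y) = y := by
  rw [← add_assoc, addC_self, zero_add]

def δ (i : ℕ) : V := fun n => if n = i then 1 else 0

def δ2 (q : ℕ × ℕ) : C := fun p => if p = q then 1 else 0

def gen (i : ℕ) : H := ⟨δ i, 0⟩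

lemma bil_δ_self (i : ℕ) : bil (δ i) (δ i) = 0 := by
  funext p
  simp only [bil, δ, Pi.zero_apply]
  split
  · rename_i h
    rcases eq_or_ne p.2 i with h2 | h2
    · rcases eq_or_ne p.1 i with h1 | h1
      · omega
      · simp [h1]
    · simp [h2]
  · rfl

lemma bil_δ (i j : ℕ) (h : ¬ j < i) : bil (δ i) (δ j) = 0 := by
  funext p
  simp only [bil, δ, Pi.zero_apply]
  split
  · rename_i hlt
    rcases eq_or_ne p.2 i with h2 | h2
    · rcases eq_or_ne p.1 j with h1 | h1
      · omega
      · simp [h1]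
    · simp [h2]
  · rfl

lemma bil_δ' (i j : ℕ) (h : j < i) : bil (δ i) (δ j) = δ2 (j, i) := by
  funext p
  simp only [bil, δ, δ2]
  rcases eq_or_ne p (j, i) with rfl | hp
  · simp [h]
  · split
    · rename_i hlt
      rcases eq_or_ne p.2 i with h2 | h2
      · rcases eq_or_ne p.1 j with h1 | h1
        · exact absurd (Prod.ext h1 h2) hp
        · simp [h1, hp]
      · simp [h2, hp]
    · simp [hp]

lemma gen_mul_self (i : ℕ) : gen i * gen i = 1 := by
  ext : 1
  · simp [gen, addV_self]
  · simp [gen, bil_δ_self]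

lemma central_left (x : C) (b : H) : (⟨0, x⟩ : H) * b = b * ⟨0, x⟩ := by
  ext : 1
  · simp [add_comm]
  · simp [bil_zero_left, bil_zero_right, add_comm]

lemma gc_eq_one_of_commute {G : Type*} [Group G] {a b : G} (h : a * b = b * a) :
    gc a b = 1 := by
  have : gc a b = a⁻¹ * b⁻¹ * (a * b) := by rw [gc, mul_assoc]
  rw [this, h]
  group

lemma gc_central (x : C) (b : H) : gc (⟨0, x⟩ : H) b = 1 :=
  gc_eq_one_of_commute (central_left x b)

lemma gc_u (a b : H) : (gc a b).u = 0 := by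
  simp only [gc, mul_u, inv_u]
  rw [add_assoc, addV_self]

lemma gc_gen (i j : ℕ) (h : i < j) : gc (gen i) (gen j) = ⟨0, δ2 (i, j)⟩ := by
  have hi : (gen i)⁻¹ = gen i := by
    ext : 1 <;> simp [gen, bil_δ_self]
  have hj : (gen j)⁻¹ = gen j := by
    ext : 1 <;> simp [gen, bil_δ_self]
  have hm : gen i * gen j = ⟨δ i + δ j, bil (δ i) (δ j)⟩ := by
    ext : 1 <;> simp [gen]
  rw [gc, hi, hj, mul_assoc (gen i * gen j), hm]
  ext : 1
  · show δ i + δ j + (δ i + δ j) = 0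
    rw [addV_self]
  · show bil (δ i) (δ j) + bil (δ i) (δ j) + bil (δ i + δ j) (δ i + δ j) = δ2 (i, j)
    rw [addC_self, zero_add, bil_add_left, bil_add_right, bil_add_right, bil_δ_self,
      bil_δ_self, bil_δ i j (by omega), bil_δ' j i h]
    rw [zero_add, add_zero, zero_add]

lemma rels_hold : ∀ r ∈ grpRels, FreeGroup.lift gen r = 1 := by
  intro w hw
  rcases hw with ⟨i, rfl⟩ | ⟨i, j, k, rfl⟩
  · rw [map_pow, FreeGroup.lift_apply_of, pow_two, gen_mul_self]
  · rw [map_gc, map_gc, FreeGroup.lift_apply_of, FreeGroup.lift_apply_of, FreeGroup.lift_apply_of]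
    have hu := gc_u (gen i) (gen j)
    have : gc (gen i) (gen j) = ⟨0, (gc (gen i) (gen j)).x⟩ := H.ext' hu rfl
    rw [this, gc_central]

def φ : GrpG →* H := PresentedGroup.toGroup rels_hold

lemma φ_yy (i : ℕ) : φ (yy i) = gen i := PresentedGroup.toGroup.of rels_hold

end NFaux

namespace NFaux2
open NFaux

lemma mk_rel_one {w : FreeGroup ℕ} (hw : w ∈ grpRels) :
    PresentedGroup.mk grpRels w = 1 := by
  show (QuotientGroup.mk w : PresentedGroup grpRels) = 1
  rw [QuotientGroup.eq_one_iff]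
  exact Subgroup.subset_normalClosure hw

lemma yy_mul_self (i : ℕ) : yy i * yy i = 1 := by
  have h := mk_rel_one (Or.inl ⟨i, rfl⟩)
  rw [map_pow, pow_two] at h
  exact h

lemma yy_inv (i : ℕ) : (yy i)⁻¹ = yy i :=
  inv_eq_of_mul_eq_one_right (yy_mul_self i)

lemma rel3 (i j k : ℕ) : gc (gc (yy i) (yy j)) (yy k) = 1 := by
  have h := mk_rel_one (Or.inr ⟨i, j, k, rfl⟩)
  rw [map_gc, map_gc] at h
  exact h

lemma commute_of_gc {G : Type*} [Group G] {a b : G} (h : gc a b = 1) : Commute a b := by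
  have : a⁻¹ * b⁻¹ * (a * b) = 1 := by rw [← mul_assoc, ← gc, h]
  have h3 : a * b = b * a := by
    calc a * b = (b * a) * (a⁻¹ * b⁻¹ * (a * b)) := by group
    _ = b * a := by rw [this, mul_one]
  exact h3

lemma c_central (i j : ℕ) (g : GrpG) : Commute (gc (yy i) (yy j)) g := by
  have hg : g ∈ Subgroup.closure (Set.range yy) := by
    have : Set.range yy = Set.range (PresentedGroup.of (rels := grpRels)) := rfl
    rw [this]
    exact (show (g : PresentedGroup grpRels) ∈ Subgroup.closure (Set.range (PresentedGroup.of (rels := grpRels))) by rw [PresentedGroup.closure_range_of]; trivial)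
  induction hg using Subgroup.closure_induction with
  | mem x hx =>
    obtain ⟨k, rfl⟩ := hx
    exact commute_of_gc (rel3 i j k)
  | one => exact Commute.one_right _
  | mul x y hx hy ihx ihy => exact ihx.mul_right ihy
  | inv x hx ihx => exact ihx.inv_right

lemma c_mul_self (i j : ℕ) : gc (yy i) (yy j) * gc (yy i) (yy j) = 1 := by
  set a := yy i
  set b := yy j
  have ha : a⁻¹ = a := yy_inv i
  have hb : b⁻¹ = b := yy_inv j
  have haa : a * a = 1 := yy_mul_self i
  have hcomm : gc a b * a = a * gc a b := (c_central i j a).eq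
  -- a * (gc a b) * a⁻¹ = (gc a b)⁻¹
  have key : a * gc a b * a⁻¹ = (gc a b)⁻¹ := by
    rw [gc, mul_inv_rev, mul_inv_rev, mul_inv_rev, inv_inv, inv_inv]
    rw [ha, hb]
    group
    rw [haa, one_mul]
  have key2 : a * gc a b * a⁻¹ = gc a b := by
    rw [← hcomm, mul_assoc, mul_inv_cancel, mul_one]
  have h3 : gc a b = (gc a b)⁻¹ := key2.symm.trans key
  nth_rewrite 2 [h3]
  rw [mul_inv_cancel]

lemma c_inv (i j : ℕ) : (gc (yy i) (yy j))⁻¹ = gc (yy i) (yy j) :=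
  inv_eq_of_mul_eq_one_right (c_mul_self i j)

lemma gc_swap {G : Type*} [Group G] (a b : G) : gc b a = (gc a b)⁻¹ := by
  rw [gc, gc]; group

lemma c_swap (i j : ℕ) : gc (yy j) (yy i) = gc (yy i) (yy j) := by
  rw [gc_swap, c_inv]

end NFaux2

namespace NFaux3
open NFaux NFaux2

def cc (q : ℕ × ℕ) : GrpG := gc (yy q.1) (yy q.2)

def PY (L : List ℕ) : GrpG := (L.map yy).prod

def PC (P : List (ℕ × ℕ)) : GrpG := (P.map cc).prod

@[simp] lemma PY_nil : PY [] = 1 := rfl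
@[simp] lemma PC_nil : PC [] = 1 := rfl
lemma PY_cons (i : ℕ) (L : List ℕ) : PY (i :: L) = yy i * PY L := by
  simp [PY]
lemma PC_cons (q : ℕ × ℕ) (P : List (ℕ × ℕ)) : PC (q :: P) = cc q * PC P := by
  simp [PC]
lemma PC_append (P Q : List (ℕ × ℕ)) : PC (P ++ Q) = PC P * PC Q := by
  simp [PC]

lemma cc_central (q : ℕ × ℕ) (g : GrpG) : Commute (cc q) g := c_central q.1 q.2 g

lemma cc_mul_self (q : ℕ × ℕ) : cc q * cc q = 1 := c_mul_self q.1 q.2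

section
variable (r : LinearOrder (ℕ × ℕ))

lemma insertC (q : ℕ × ℕ) : ∀ P : List (ℕ × ℕ), List.Pairwise (fun a b => r.lt a b) P →
    ∃ P', List.Pairwise (fun a b => r.lt a b) P' ∧ (∀ x ∈ P', x ∈ q :: P) ∧
      cc q * PC P = PC P' := by
  have htrans : ∀ {a b c : ℕ × ℕ}, r.lt a b → r.lt b c → r.lt a c := fun hab hbc =>
    @lt_trans _ r.toPartialOrder.toPreorder _ _ _ hab hbc
  intro P
  induction P with
  | nil =>
    intro _
    exact ⟨[q], by simp, by simp, by simp [PC_cons]⟩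
  | cons p rest ih =>
    intro hs
    rw [List.pairwise_cons] at hs
    rcases @lt_trichotomy _ r q p with hlt | heq | hgt
    · refine ⟨q :: p :: rest, ?_, ?_, ?_⟩
      · rw [List.pairwise_cons]
        refine ⟨?_, by rw [List.pairwise_cons]; exact hs⟩
        intro b hb
        rcases List.mem_cons.mp hb with rfl | hb
        · exact hlt
        · exact htrans hlt (hs.1 b hb)
      · intro x hx; exact hx
      · rw [PC_cons q (p :: rest)]
    · subst heq
      refine ⟨rest, hs.2, ?_, ?_⟩
      · intro x hx
        exact List.mem_cons_of_mem _ (List.mem_cons_of_mem _ hx)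
      · rw [PC_cons, ← mul_assoc, cc_mul_self, one_mul]
    · obtain ⟨P'', hs'', hmem'', hprod''⟩ := ih hs.2
      refine ⟨p :: P'', ?_, ?_, ?_⟩
      · rw [List.pairwise_cons]
        refine ⟨?_, hs''⟩
        intro b hb
        rcases List.mem_cons.mp (hmem'' b hb) with rfl | hb'
        · exact hgt
        · exact hs.1 b hb'
      · intro x hx
        rcases List.mem_cons.mp hx with rfl | hx'
        · exact List.mem_cons_of_mem _ (List.mem_cons_self)
        · rcases List.mem_cons.mp (hmem'' x hx') with rfl | hx''
          · exact List.mem_cons_self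
          · exact List.mem_cons_of_mem _ (List.mem_cons_of_mem _ hx'')
      · rw [PC_cons, PC_cons, ← hprod'', ← mul_assoc, ← mul_assoc,
          (cc_central q (cc p)).eq]

lemma sortC : ∀ Q : List (ℕ × ℕ), ∃ P', List.Pairwise (fun a b => r.lt a b) P' ∧
    (∀ x ∈ P', x ∈ Q) ∧ PC Q = PC P' := by
  intro Q
  induction Q with
  | nil => exact ⟨[], by simp, by simp, rfl⟩
  | cons q Q ih =>
    obtain ⟨P1, hs1, hm1, hp1⟩ := ih
    obtain ⟨P2, hs2, hm2, hp2⟩ := insertC r q P1 hs1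
    refine ⟨P2, hs2, ?_, ?_⟩
    · intro x hx
      rcases List.mem_cons.mp (hm2 x hx) with rfl | hx'
      · exact List.mem_cons_self
      · exact List.mem_cons_of_mem _ (hm1 x hx')
    · rw [PC_cons, hp1, hp2]

end

lemma yy_swap (j k : ℕ) : yy k * yy j = yy j * yy k * gc (yy k) (yy j) := by
  rw [gc]; group

lemma insertY (k : ℕ) : ∀ L : List ℕ, List.Pairwise (· < ·) L →
    ∃ L' Q, List.Pairwise (· < ·) L' ∧ (∀ x ∈ L', x ∈ k :: L) ∧
      (∀ q ∈ Q, q.1 < q.2) ∧ yy k * PY L = PY L' * PC Q := by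
  intro L
  induction L with
  | nil =>
    intro _
    exact ⟨[k], [], by simp, by simp, by simp, by simp [PY_cons]⟩
  | cons j rest ih =>
    intro hs
    rw [List.pairwise_cons] at hs
    rcases lt_trichotomy k j with hlt | heq | hgt
    · refine ⟨k :: j :: rest, [], ?_, fun x hx => hx, by simp, ?_⟩
      · rw [List.pairwise_cons]
        refine ⟨?_, by rw [List.pairwise_cons]; exact hs⟩
        intro b hb
        rcases List.mem_cons.mp hb with rfl | hb
        · exact hlt
        · exact lt_trans hlt (hs.1 b hb)
      · rw [PC_nil, mul_one, PY_cons k (j :: rest)]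
    · subst heq
      refine ⟨rest, [], hs.2, ?_, by simp, ?_⟩
      · intro x hx
        exact List.mem_cons_of_mem _ (List.mem_cons_of_mem _ hx)
      · rw [PC_nil, mul_one, PY_cons, ← mul_assoc, yy_mul_self, one_mul]
    · obtain ⟨L'', Q', hs'', hmem'', hq'', hprod''⟩ := ih hs.2
      refine ⟨j :: L'', Q' ++ [(j, k)], ?_, ?_, ?_, ?_⟩
      · rw [List.pairwise_cons]
        refine ⟨?_, hs''⟩
        intro b hb
        rcases List.mem_cons.mp (hmem'' b hb) with rfl | hb'
        · exact hgt
        · exact hs.1 b hb'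
      · intro x hx
        rcases List.mem_cons.mp hx with rfl | hx'
        · exact List.mem_cons_of_mem _ (List.mem_cons_self)
        · rcases List.mem_cons.mp (hmem'' x hx') with rfl | hx''
          · exact List.mem_cons_self
          · exact List.mem_cons_of_mem _ (List.mem_cons_of_mem _ hx'')
      · intro q hq
        rcases List.mem_append.mp hq with hq1 | hq2
        · exact hq'' q hq1
        · rw [List.mem_singleton] at hq2
          subst hq2
          exact hgt
      · have hc : gc (yy k) (yy j) = cc (j, k) := c_swap j k
        calc yy k * PY (j :: rest)
            = yy k * (yy j * PY rest) := by rw [PY_cons]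
          _ = (yy k * yy j) * PY rest := by rw [mul_assoc]
          _ = (yy j * yy k * cc (j, k)) * PY rest := by rw [yy_swap, hc]
          _ = yy j * yy k * PY rest * cc (j, k) := by
              rw [mul_assoc (yy j * yy k), (cc_central (j, k) (PY rest)).eq, ← mul_assoc]
          _ = yy j * (yy k * PY rest) * cc (j, k) := by rw [mul_assoc (yy j)]
          _ = yy j * (PY L'' * PC Q') * cc (j, k) := by rw [hprod'']
          _ = PY (j :: L'') * (PC Q' * cc (j, k)) := by
              rw [PY_cons]; group
          _ = PY (j :: L'') * PC (Q' ++ [(j, k)]) := by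
              rw [PC_append, PC_cons, PC_nil, mul_one]

end NFaux3

namespace NFaux4
open NFaux NFaux2 NFaux3

lemma existsNF (r : LinearOrder (ℕ × ℕ)) : ∀ l : List ℕ,
    ∃ L P, List.Pairwise (· < ·) L ∧ (∀ q ∈ P, q.1 < q.2) ∧
      List.Pairwise (fun a b => r.lt a b) P ∧ (l.map yy).prod = PY L * PC P := by
  intro l
  induction l with
  | nil => exact ⟨[], [], by simp, by simp, by simp, by simp⟩
  | cons k l ih =>
    obtain ⟨L, P, hL, hP, hPs, hprod⟩ := ih
    obtain ⟨L', Q, hL', hmem', hQ, hprod'⟩ := insertY k L hL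
    obtain ⟨P2, hP2s, hP2m, hP2⟩ := sortC r (Q ++ P)
    refine ⟨L', P2, hL', ?_, hP2s, ?_⟩
    · intro q hq
      rcases List.mem_append.mp (hP2m q hq) with h1 | h2
      · exact hQ q h1
      · exact hP q h2
    · calc ((k :: l).map yy).prod = yy k * (l.map yy).prod := by simp
        _ = yy k * (PY L * PC P) := by rw [hprod]
        _ = (yy k * PY L) * PC P := by rw [mul_assoc]
        _ = (PY L' * PC Q) * PC P := by rw [hprod']
        _ = PY L' * PC (Q ++ P) := by rw [PC_append, mul_assoc]
        _ = PY L' * PC P2 := by rw [hP2]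

lemma gen_word (a : GrpG) : ∃ l : List ℕ, a = (l.map yy).prod := by
  have hg : a ∈ Subgroup.closure (Set.range yy) := by
    have : Set.range yy = Set.range (PresentedGroup.of (rels := grpRels)) := rfl
    rw [this]
    exact (show (a : PresentedGroup grpRels) ∈ Subgroup.closure (Set.range (PresentedGroup.of (rels := grpRels))) by rw [PresentedGroup.closure_range_of]; trivial)
  induction hg using Subgroup.closure_induction with
  | mem x hx =>
    obtain ⟨k, rfl⟩ := hx
    exact ⟨[k], by simp⟩
  | one => exact ⟨[], by simp⟩
  | mul x y hx hy ihx ihy =>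
    obtain ⟨lx, rfl⟩ := ihx
    obtain ⟨ly, rfl⟩ := ihy
    exact ⟨lx ++ ly, by simp⟩
  | inv x hx ihx =>
    obtain ⟨lx, rfl⟩ := ihx
    refine ⟨lx.reverse, ?_⟩
    rw [List.prod_inv_reverse, ← List.map_reverse, ← List.map_reverse, List.map_map]
    congr 1
    apply List.map_congr_left
    intro i _
    exact yy_inv i

def indV (L : List ℕ) : V := fun n => if n ∈ L then 1 else 0

def indC (P : List (ℕ × ℕ)) : C := fun p => if p ∈ P then 1 else 0

lemma φ_PY (L : List ℕ) (hL : List.Pairwise (· < ·) L) : φ (PY L) = ⟨indV L, 0⟩ := by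
  induction L with
  | nil =>
    rw [PY_nil, map_one]
    ext : 1
    · funext n; simp [indV]
    · rfl
  | cons i L ih =>
    rw [List.pairwise_cons] at hL
    rw [PY_cons, map_mul, φ_yy, ih hL.2]
    ext : 1
    · show δ i + indV L = indV (i :: L)
      funext n
      rcases eq_or_ne n i with rfl | hn
      · have : n ∉ L := fun h => lt_irrefl n (hL.1 n h)
        simp [δ, indV, this]
      · simp [δ, indV, hn]
    · show (0 : C) + 0 + bil (δ i) (indV L) = 0
      rw [add_zero, zero_add]
      funext p
      simp only [bil, Pi.zero_apply]
      split
      · rename_i hp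
        by_cases h2 : p.2 = i
        · by_cases h1 : p.1 ∈ L
          · have := hL.1 p.1 h1
            omega
          · simp [indV, h1]
        · simp [δ, h2]
      · rfl

lemma φ_cc (q : ℕ × ℕ) (hq : q.1 < q.2) : φ (cc q) = ⟨0, δ2 q⟩ := by
  rw [cc, map_gc, φ_yy, φ_yy, gc_gen q.1 q.2 hq]

lemma φ_PC (P : List (ℕ × ℕ)) (hlt : ∀ q ∈ P, q.1 < q.2)
    (hP : P.Nodup) : φ (PC P) = ⟨0, indC P⟩ := by
  induction P with
  | nil =>
    rw [PC_nil, map_one]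
    ext : 1
    · rfl
    · funext p; simp [indC]
  | cons q P ih =>
    rw [List.nodup_cons] at hP
    rw [PC_cons, map_mul, φ_cc q (hlt q (List.mem_cons_self)),
      ih (fun x hx => hlt x (List.mem_cons_of_mem _ hx)) hP.2]
    ext : 1
    · show (0 : V) + 0 = 0
      rw [add_zero]
    · show δ2 q + indC P + bil 0 0 = indC (q :: P)
      rw [bil_zero_left, add_zero]
      funext p
      rcases eq_or_ne p q with rfl | hp
      · simp [δ2, indC, hP.1]
      · simp [δ2, indC, hp]

lemma eq_of_sorted_mem_iff {α : Type*} (lt : α → α → Prop)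
    (htrans : ∀ a b c, lt a b → lt b c → lt a c) (hirr : ∀ a, ¬ lt a a) :
    ∀ l₁ l₂ : List α, List.Pairwise lt l₁ → List.Pairwise lt l₂ →
      (∀ x, x ∈ l₁ ↔ x ∈ l₂) → l₁ = l₂ := by
  intro l₁
  induction l₁ with
  | nil =>
    intro l₂ _ _ hmem
    cases l₂ with
    | nil => rfl
    | cons b t => exact absurd ((hmem b).mpr (List.mem_cons_self)) List.not_mem_nil
  | cons a t ih =>
    intro l₂ h₁ h₂ hmem
    cases l₂ with
    | nil => exact absurd ((hmem a).mp (List.mem_cons_self)) List.not_mem_nil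
    | cons b t₂ =>
      rw [List.pairwise_cons] at h₁ h₂
      have hab : a = b := by
        rcases List.mem_cons.mp ((hmem a).mp (List.mem_cons_self)) with h | h
        · exact h
        · rcases List.mem_cons.mp ((hmem b).mpr (List.mem_cons_self)) with h' | h'
          · exact h'.symm
          · exact absurd (htrans a b a (h₁.1 b h') (h₂.1 a h)) (hirr a)
      subst hab
      have htails : ∀ x, x ∈ t ↔ x ∈ t₂ := by
        intro x
        constructor
        · intro hx
          rcases List.mem_cons.mp ((hmem x).mp (List.mem_cons_of_mem _ hx)) with rfl | h
          · exact absurd (h₁.1 x hx) (hirr x)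
          · exact h
        · intro hx
          rcases List.mem_cons.mp ((hmem x).mpr (List.mem_cons_of_mem _ hx)) with rfl | h
          · exact absurd (h₂.1 x hx) (hirr x)
          · exact h
      rw [ih t₂ h₁.2 h₂.2 htails]

lemma indV_inj {L₁ L₂ : List ℕ} (h : indV L₁ = indV L₂) : ∀ x, x ∈ L₁ ↔ x ∈ L₂ := by
  intro x
  have := congrFun h x
  simp only [indV] at this
  by_cases h1 : x ∈ L₁ <;> by_cases h2 : x ∈ L₂ <;> simp_all

lemma indC_inj {P₁ P₂ : List (ℕ × ℕ)} (h : indC P₁ = indC P₂) : ∀ x, x ∈ P₁ ↔ x ∈ P₂ := by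
  intro x
  have := congrFun h x
  simp only [indC] at this
  by_cases h1 : x ∈ P₁ <;> by_cases h2 : x ∈ P₂ <;> simp_all

end NFaux4

/-- for any fixed linear order on pairs, every element of `𝒢` has a
unique normal form `y_{i₁} ⋯ y_{i_q} (y_{j₁},y_{j₂}) ⋯ (y_{j_{2q'-1}},y_{j_{2q'}})`
with `i₁ < ⋯ < i_q`, `j_{2s-1} < j_{2s}`, and the pairs strictly increasing. -/
theorem GrpG_normal_form (r : LinearOrder (ℕ × ℕ)) (a : GrpG) :
    ∃! p : List ℕ × List (ℕ × ℕ),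
      List.Pairwise (· < ·) p.1 ∧
      (∀ q ∈ p.2, q.1 < q.2) ∧
      List.Pairwise (fun q q' => r.lt q q') p.2 ∧
      a = (p.1.map yy).prod * (p.2.map fun q => gc (yy q.1) (yy q.2)).prod := by
  classical
  obtain ⟨l, rfl⟩ := NFaux4.gen_word a
  obtain ⟨L, P, hL, hPlt, hPs, hprod⟩ := NFaux4.existsNF r l
  have hirr : ∀ q : ℕ × ℕ, ¬ r.lt q q := fun q =>
    @lt_irrefl _ r.toPartialOrder.toPreorder q
  have htrans : ∀ a b c : ℕ × ℕ, r.lt a b → r.lt b c → r.lt a c := fun _ _ _ hab hbc =>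
    @lt_trans _ r.toPartialOrder.toPreorder _ _ _ hab hbc
  have hnodup : ∀ P' : List (ℕ × ℕ), List.Pairwise (fun q q' => r.lt q q') P' → P'.Nodup := by
    intro P' hP'
    refine hP'.imp ?_
    intro a b hab
    rintro rfl
    exact hirr a hab
  have key : ∀ (L' : List ℕ) (P' : List (ℕ × ℕ)), List.Pairwise (· < ·) L' →
      (∀ q ∈ P', q.1 < q.2) → List.Pairwise (fun q q' => r.lt q q') P' →
      NFaux.φ (NFaux3.PY L' * NFaux3.PC P') = ⟨NFaux4.indV L', NFaux4.indC P'⟩ := by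
    intro L' P' h1 h2 h3
    rw [map_mul, NFaux4.φ_PY L' h1, NFaux4.φ_PC P' h2 (hnodup P' h3)]
    ext : 1
    · show NFaux4.indV L' + 0 = NFaux4.indV L'
      rw [add_zero]
    · show (0 : NFaux.C) + NFaux4.indC P' + NFaux.bil (NFaux4.indV L') 0 = NFaux4.indC P'
      rw [NFaux.bil_zero_right, add_zero, zero_add]
  refine ⟨(L, P), ⟨hL, hPlt, hPs, hprod⟩, ?_⟩
  rintro ⟨L₂, P₂⟩ ⟨h1, h2, h3, h4⟩
  have h4' : (l.map yy).prod = NFaux3.PY L₂ * NFaux3.PC P₂ := h4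
  have heq : NFaux.φ (NFaux3.PY L₂ * NFaux3.PC P₂) = NFaux.φ (NFaux3.PY L * NFaux3.PC P) := by
    rw [← h4', ← hprod]
  rw [key L₂ P₂ h1 h2 h3, key L P hL hPlt hPs] at heq
  have hu : NFaux4.indV L₂ = NFaux4.indV L := congrArg NFaux.H.u heq
  have hx : NFaux4.indC P₂ = NFaux4.indC P := congrArg NFaux.H.x heq
  have hLeq : L₂ = L :=
    NFaux4.eq_of_sorted_mem_iff (· < ·) (fun _ _ _ => Nat.lt_trans) (fun n => Nat.lt_irrefl n)
      L₂ L h1 hL (NFaux4.indV_inj hu)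
  have hPeq : P₂ = P :=
    NFaux4.eq_of_sorted_mem_iff (fun q q' => r.lt q q') htrans hirr
      P₂ P h3 hPs (NFaux4.indC_inj hx)
  rw [hLeq, hPeq]
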